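/- Let $R_2 > 0$, $d \in [0, R_2)$, $n \geq 2$, and define $R_d(\theta) = d\cos\theta + \sqrt{R_2^2 - d^2\sin^2\theta}$. Then $\int_0^\pi \sin^n\theta \, R_d^n(\theta)\, \sqrt{R_d(\theta)^2 + R_d'(\theta)^2}\, d\theta = R_2^{n+1} \int_0^\pi \sin^n\theta\, d\theta$; that is, $V_1(d) = V_1(0)$ for all $d \in [0, R_2)$. -/

import Mathlib

open Real

/-- Radial parametrization of the boundary of the shifted ball. -/
noncomputable def Rd (R2 d θ : ℝ) : ℝ :=
  d * Real.cos θ + Real.sqrt (R2 ^ 2 - d ^ 2 * Real.sin θ ^ 2)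

section Aux

variable {R2 d : ℝ}



lemma g_pos (hR2 : 0 < R2) (hd0 : 0 ≤ d) (hdR : d < R2) (θ : ℝ) : 0 < R2 ^ 2 - d ^ 2 * Real.sin θ ^ 2 := by
  nlinarith [Real.sin_sq_le_one θ, sq_nonneg d, sq_nonneg (Real.sin θ)]

lemma S_pos (hR2 : 0 < R2) (hd0 : 0 ≤ d) (hdR : d < R2) (θ : ℝ) : 0 < Real.sqrt (R2 ^ 2 - d ^ 2 * Real.sin θ ^ 2) :=
  Real.sqrt_pos.mpr (g_pos hR2 hd0 hdR θ)

lemma S_sq (hR2 : 0 < R2) (hd0 : 0 ≤ d) (hdR : d < R2) (θ : ℝ) :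
    Real.sqrt (R2 ^ 2 - d ^ 2 * Real.sin θ ^ 2) ^ 2 = R2 ^ 2 - d ^ 2 * Real.sin θ ^ 2 :=
  Real.sq_sqrt (g_pos hR2 hd0 hdR θ).le

lemma Rd_pos (hR2 : 0 < R2) (hd0 : 0 ≤ d) (hdR : d < R2) (θ : ℝ) : 0 < Rd R2 d θ := by
  have hs := S_pos hR2 hd0 hdR θ
  have hsq := S_sq hR2 hd0 hdR θ
  rw [Rd]
  nlinarith [Real.sin_sq_add_cos_sq θ, sq_nonneg (Real.cos θ)]

lemma Rd_hasDerivAt (hR2 : 0 < R2) (hd0 : 0 ≤ d) (hdR : d < R2) (θ : ℝ) :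
    HasDerivAt (Rd R2 d)
      (-(d * Real.sin θ) * Rd R2 d θ / Real.sqrt (R2 ^ 2 - d ^ 2 * Real.sin θ ^ 2)) θ := by
  have hg := g_pos hR2 hd0 hdR θ
  have hs := S_pos hR2 hd0 hdR θ
  have hsq := S_sq hR2 hd0 hdR θ
  have h1 : HasDerivAt (fun t => R2 ^ 2 - d ^ 2 * Real.sin t ^ 2)
      (-(d ^ 2 * (2 * Real.sin θ * Real.cos θ))) θ := by
    have := ((Real.hasDerivAt_sin θ).pow 2).const_mul (d ^ 2)
    simpa using (this.const_sub (R2 ^ 2))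
  have h2 : HasDerivAt (fun t => Real.sqrt (R2 ^ 2 - d ^ 2 * Real.sin t ^ 2))
      (-(d ^ 2 * (2 * Real.sin θ * Real.cos θ)) /
        (2 * Real.sqrt (R2 ^ 2 - d ^ 2 * Real.sin θ ^ 2))) θ := h1.sqrt hg.ne'
  have h3 : HasDerivAt (fun t => d * Real.cos t) (-(d * Real.sin θ)) θ := by
    simpa [mul_comm] using (Real.hasDerivAt_cos θ).const_mul d
  have := h3.add h2
  refine this.congr_deriv ?_
  rw [Rd]
  field_simp
  ring

lemma sqrt_term (hR2 : 0 < R2) (hd0 : 0 ≤ d) (hdR : d < R2) (θ : ℝ) :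
    Real.sqrt ((Rd R2 d θ) ^ 2 + (deriv (Rd R2 d) θ) ^ 2)
      = Rd R2 d θ * R2 / Real.sqrt (R2 ^ 2 - d ^ 2 * Real.sin θ ^ 2) := by
  have hs := S_pos hR2 hd0 hdR θ
  have hsq := S_sq hR2 hd0 hdR θ
  have hr := Rd_pos hR2 hd0 hdR θ
  rw [(Rd_hasDerivAt hR2 hd0 hdR θ).deriv]
  have : (Rd R2 d θ) ^ 2 + (-(d * Real.sin θ) * Rd R2 d θ /
      Real.sqrt (R2 ^ 2 - d ^ 2 * Real.sin θ ^ 2)) ^ 2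
      = (Rd R2 d θ * R2 / Real.sqrt (R2 ^ 2 - d ^ 2 * Real.sin θ ^ 2)) ^ 2 := by
    field_simp
    nlinarith [hsq]
  rw [this, Real.sqrt_sq (by positivity)]

/-- The substitution angle. -/
noncomputable def phi (R2 d θ : ℝ) : ℝ := θ + Real.arcsin (d / R2 * Real.sin θ)

lemma arg_lt (hR2 : 0 < R2) (hd0 : 0 ≤ d) (hdR : d < R2) (θ : ℝ) : |d / R2 * Real.sin θ| < 1 := by
  rw [abs_mul, abs_div, abs_of_nonneg hd0, abs_of_pos hR2]
  have h1 : d / R2 < 1 := (div_lt_one hR2).mpr hdR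
  have h2 : |Real.sin θ| ≤ 1 := Real.abs_sin_le_one θ
  have h3 : 0 ≤ d / R2 := div_nonneg hd0 hR2.le
  nlinarith [abs_nonneg (Real.sin θ)]

lemma cos_arcsin_arg (hR2 : 0 < R2) (hd0 : 0 ≤ d) (hdR : d < R2) (θ : ℝ) :
    Real.sqrt (1 - (d / R2 * Real.sin θ) ^ 2)
      = Real.sqrt (R2 ^ 2 - d ^ 2 * Real.sin θ ^ 2) / R2 := by
  have h : 1 - (d / R2 * Real.sin θ) ^ 2 = (R2 ^ 2 - d ^ 2 * Real.sin θ ^ 2) / R2 ^ 2 := by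
    field_simp
  rw [h, Real.sqrt_div (g_pos hR2 hd0 hdR θ).le, Real.sqrt_sq hR2.le]

lemma phi_hasDerivAt (hR2 : 0 < R2) (hd0 : 0 ≤ d) (hdR : d < R2) (θ : ℝ) :
    HasDerivAt (phi R2 d)
      (Rd R2 d θ / Real.sqrt (R2 ^ 2 - d ^ 2 * Real.sin θ ^ 2)) θ := by
  have habs := arg_lt hR2 hd0 hdR θ
  have h1 : HasDerivAt (fun t => d / R2 * Real.sin t) (d / R2 * Real.cos θ) θ :=
    (Real.hasDerivAt_sin θ).const_mul _
  have h2 : HasDerivAt Real.arcsin (1 / Real.sqrt (1 - (d / R2 * Real.sin θ) ^ 2))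
      (d / R2 * Real.sin θ) :=
    Real.hasDerivAt_arcsin (by rw [abs_lt] at habs; linarith [habs.1]) (by
      rw [abs_lt] at habs; linarith [habs.2])
  have h3 := (h2.comp θ h1)
  have h4 := (hasDerivAt_id θ).add h3
  refine h4.congr_deriv ?_
  rw [cos_arcsin_arg hR2 hd0 hdR, Rd]
  have hs := S_pos hR2 hd0 hdR θ
  field_simp
  ring

lemma sin_phi (hR2 : 0 < R2) (hd0 : 0 ≤ d) (hdR : d < R2) (θ : ℝ) :
    Real.sin (phi R2 d θ) = Real.sin θ * Rd R2 d θ / R2 := by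
  have habs := (arg_lt hR2 hd0 hdR θ).le
  rw [phi, Real.sin_add, Real.cos_arcsin, Real.sin_arcsin (by
      rw [abs_le] at habs; linarith [habs.1]) (by rw [abs_le] at habs; linarith [habs.2]),
    cos_arcsin_arg hR2 hd0 hdR, Rd]
  field_simp
  ring

end Aux

theorem stmt4 (R2 : ℝ) (hR2 : 0 < R2) (d : ℝ) (hd : d ∈ Set.Ico 0 R2)
    (n : ℕ) (hn : 2 ≤ n) :
    ∫ θ in (0:ℝ)..π,
        Real.sin θ ^ n * (Rd R2 d θ) ^ n *
          Real.sqrt ((Rd R2 d θ) ^ 2 + (deriv (Rd R2 d) θ) ^ 2)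
      = R2 ^ (n + 1) * ∫ θ in (0:ℝ)..π, Real.sin θ ^ n := by
  obtain ⟨hd0, hdR⟩ := hd
  have key : ∀ θ : ℝ,
      Real.sin θ ^ n * (Rd R2 d θ) ^ n *
          Real.sqrt ((Rd R2 d θ) ^ 2 + (deriv (Rd R2 d) θ) ^ 2)
        = (Rd R2 d θ / Real.sqrt (R2 ^ 2 - d ^ 2 * Real.sin θ ^ 2)) •
            ((fun u => R2 ^ (n + 1) * Real.sin u ^ n) ∘ (phi R2 d)) θ := by
    intro θ
    have hs := S_pos hR2 hd0 hdR θ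
    have hr := Rd_pos hR2 hd0 hdR θ
    rw [sqrt_term hR2 hd0 hdR θ]
    simp only [Function.comp_apply, smul_eq_mul, sin_phi hR2 hd0 hdR θ]
    rw [div_pow, mul_pow]
    field_simp
    ring
  rw [intervalIntegral.integral_congr (g := fun θ =>
      (Rd R2 d θ / Real.sqrt (R2 ^ 2 - d ^ 2 * Real.sin θ ^ 2)) •
        ((fun u => R2 ^ (n + 1) * Real.sin u ^ n) ∘ (phi R2 d)) θ)
      (fun θ _ => key θ)]
  have hcont : ContinuousOn (fun θ => Rd R2 d θ / Real.sqrt (R2 ^ 2 - d ^ 2 * Real.sin θ ^ 2))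
      (Set.uIcc 0 π) := by
    apply ContinuousOn.div
    · exact (Continuous.continuousOn (by unfold Rd; fun_prop))
    · fun_prop
    · exact fun θ _ => (S_pos hR2 hd0 hdR θ).ne'
  rw [intervalIntegral.integral_comp_smul_deriv
      (fun θ _ => phi_hasDerivAt hR2 hd0 hdR θ) hcont (by fun_prop)]
  have h0 : phi R2 d 0 = 0 := by simp [phi]
  have hπ : phi R2 d π = π := by simp [phi]
  rw [h0, hπ, intervalIntegral.integral_const_mul]
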